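/- (Proposition 1, optimality) Let N ≥ 2, 1/N = p_l < p_h < 1, integers 1 ≤ t < T, and suppose the linear program is feasible. Let k̄ = min{k′ : ((T−t)/T)·Σ_{k ≤ k′} [τ_d·μ(k;t) − τ_c·λ(k;t)] ≥ τ_d − τ_c} and let f* be the threshold rule with f*(k) = 1 for k < k̄, f*(k̄) = [ (T/(T−t))·(τ_d − τ_c) − Σ_{k=0}^{k̄−1} (τ_d·μ(k;t) − τ_c·λ(k;t)) ] / (τ_d·μ(k̄;t) − τ_c·λ(k̄;t)), and f*(k) = 0 for k > k̄. Then for every feasible intervention rule f : {0,…,t} → [0,1], Σ_{k=0}^t λ(k;t) f*(k) ≤ Σ_{k=0}^t λ(k;t) f(k); that is, f* is an optimal solution of the linear program. -/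

import Mathlib

open Finset

/-- `lam N t pl k` is the probability of `k` idle signals out of `t` when all `N`
users transmit with probability `pl`. -/
noncomputable def lam (N t : ℕ) (pl : ℝ) (k : ℕ) : ℝ :=
  (t.choose k : ℝ) * ((1 - pl) ^ N) ^ k * (1 - (1 - pl) ^ N) ^ (t - k)

/-- `mu N t pl ph k` is the probability of `k` idle signals out of `t` when exactly
one user transmits with probability `ph` and the others with `pl`. -/
noncomputable def mu (N t : ℕ) (pl ph : ℝ) (k : ℕ) : ℝ :=
  (t.choose k : ℝ) * ((1 - pl) ^ (N - 1) * (1 - ph)) ^ k *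
    (1 - (1 - pl) ^ (N - 1) * (1 - ph)) ^ (t - k)

/-- The cooperation throughput `τ_c = pl (1 - pl)^{N-1}`. -/
noncomputable def tauC (N : ℕ) (pl : ℝ) : ℝ := pl * (1 - pl) ^ (N - 1)

/-- The defection throughput `τ_d = ph (1 - pl)^{N-1}`. -/
noncomputable def tauD (N : ℕ) (pl ph : ℝ) : ℝ := ph * (1 - pl) ^ (N - 1)

/-- `f : {0,…,t} → [0,1]` is an intervention rule. -/
def IsRule (t : ℕ) (f : ℕ → ℝ) : Prop := ∀ k ≤ t, 0 ≤ f k ∧ f k ≤ 1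

/-- The left-hand side of the incentive constraint:
`((T−t)/T) · Σ_{k=0}^t [τ_d μ(k;t) − τ_c λ(k;t)] f(k)`. -/
noncomputable def incLHS (N t T : ℕ) (pl ph : ℝ) (f : ℕ → ℝ) : ℝ :=
  (((T : ℝ) - t) / T) * ∑ k ∈ Finset.range (t + 1),
    (tauD N pl ph * mu N t pl ph k - tauC N pl * lam N t pl k) * f k

/-- A feasible solution of the linear program: an intervention rule satisfying the
incentive constraint. -/
def Feasible (N t T : ℕ) (pl ph : ℝ) (f : ℕ → ℝ) : Prop :=
  IsRule t f ∧ incLHS N t T pl ph f ≥ tauD N pl ph - tauC N pl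

/-- The objective of the linear program: the expected transmission probability of the
intervention device under cooperation, `Σ_{k=0}^t λ(k;t) f(k)`. -/
noncomputable def objective (N t : ℕ) (pl : ℝ) (f : ℕ → ℝ) : ℝ :=
  ∑ k ∈ Finset.range (t + 1), lam N t pl k * f k

/-- The threshold intervention rule of Proposition 1: `f*(k) = 1` for `k < k̄`,
`f*(k) = 0` for `k > k̄`, and at `k = k̄` the value making the incentive constraint
bind. -/
noncomputable def thresholdRule (N t T : ℕ) (pl ph : ℝ) (kbar : ℕ) : ℕ → ℝ :=
  fun k =>
    if k < kbar then 1
    else if k = kbar then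
      ((T : ℝ) / ((T : ℝ) - t) * (tauD N pl ph - tauC N pl) -
          ∑ j ∈ Finset.range kbar,
            (tauD N pl ph * mu N t pl ph j - tauC N pl * lam N t pl j)) /
        (tauD N pl ph * mu N t pl ph kbar - tauC N pl * lam N t pl kbar)
    else 0

private lemma cross_aux (A B : ℝ) (t k m : ℕ) (hB : 0 ≤ B) (hBA : B ≤ A) (hA1 : A ≤ 1)
    (hk : k ≤ m) (hm : m ≤ t) :
    ((t.choose m : ℝ) * B^m * (1-B)^(t-m)) * ((t.choose k : ℝ) * A^k * (1-A)^(t-k))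
      ≤ ((t.choose k : ℝ) * B^k * (1-B)^(t-k)) * ((t.choose m : ℝ) * A^m * (1-A)^(t-m)) := by
  obtain ⟨d, rfl⟩ := Nat.exists_eq_add_of_le hk
  have h1 : t - k = (t - (k + d)) + d := by omega
  have hA0 : 0 ≤ A := hB.trans hBA
  have h1A : (0:ℝ) ≤ 1 - A := by linarith
  have h1B : (0:ℝ) ≤ 1 - B := by linarith
  have hkey : (B * (1 - A)) ^ d ≤ (A * (1 - B)) ^ d := by
    apply pow_le_pow_left₀ (by nlinarith) (by nlinarith)
  have hF : (0:ℝ) ≤ (t.choose k : ℝ) * (t.choose (k+d) : ℝ) * B^k * A^k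
      * (1-B)^(t-(k+d)) * (1-A)^(t-(k+d)) := by
    apply mul_nonneg (mul_nonneg (mul_nonneg (mul_nonneg (mul_nonneg ?_ ?_) ?_) ?_) ?_) ?_
    · positivity
    · positivity
    · exact pow_nonneg hB k
    · exact pow_nonneg hA0 k
    · exact pow_nonneg h1B _
    · exact pow_nonneg h1A _
  have e1 : ((t.choose (k+d) : ℝ) * B^(k+d) * (1-B)^(t-(k+d))) * ((t.choose k : ℝ) * A^k * (1-A)^(t-k))
      = ((t.choose k : ℝ) * (t.choose (k+d) : ℝ) * B^k * A^k * (1-B)^(t-(k+d)) * (1-A)^(t-(k+d)))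
        * (B * (1-A))^d := by rw [h1, mul_pow]; ring
  have e2 : ((t.choose k : ℝ) * B^k * (1-B)^(t-k)) * ((t.choose (k+d) : ℝ) * A^(k+d) * (1-A)^(t-(k+d)))
      = ((t.choose k : ℝ) * (t.choose (k+d) : ℝ) * B^k * A^k * (1-B)^(t-(k+d)) * (1-A)^(t-(k+d)))
        * (A * (1-B))^d := by rw [h1, mul_pow]; ring
  rw [e1, e2]
  exact mul_le_mul_of_nonneg_left hkey hF

private lemma lp_opt (t : ℕ) (a b : ℕ → ℝ) (c D : ℝ) (hc : 0 < c) (hD : 0 < D)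
    (ha : ∀ k ≤ t, 0 < a k)
    (hcross : ∀ k m, k ≤ m → m ≤ t → b m * a k ≤ b k * a m)
    (hbz : ∀ k, t < k → b k = 0)
    (kbar : ℕ)
    (hkbar : c * ∑ k ∈ Finset.range (kbar+1), b k ≥ D)
    (hkbarmin : ∀ k' < kbar, c * ∑ k ∈ Finset.range (k'+1), b k < D)
    (g : ℕ → ℝ)
    (hg : ∀ k, g k = if k < kbar then 1 else if k = kbar then
        ((1/c) * D - ∑ j ∈ Finset.range kbar, b j) / b kbar else 0) :
    (IsRule t g ∧ c * ∑ k ∈ Finset.range (t+1), b k * g k ≥ D) ∧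
    ∀ f, IsRule t f → c * ∑ k ∈ Finset.range (t+1), b k * f k ≥ D →
      ∑ k ∈ Finset.range (t+1), a k * g k ≤ ∑ k ∈ Finset.range (t+1), a k * f k := by
  have h1c : (0:ℝ) < 1/c := by positivity
  have hkt : kbar ≤ t := by
    by_contra h
    push_neg at h
    have heq : ∑ k ∈ Finset.range (t+1), b k = ∑ k ∈ Finset.range (kbar+1), b k :=
      Finset.sum_subset (Finset.range_subset_range.mpr (by omega))
        (fun x _ hx => hbz x (by simp only [Finset.mem_range, not_lt] at hx; omega))
    have h2 := hkbarmin t h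
    rw [heq] at h2
    linarith
  have hSlt : c * ∑ j ∈ Finset.range kbar, b j < D := by
    rcases Nat.eq_zero_or_pos kbar with h0 | h0
    · subst h0; simpa using hD
    · have := hkbarmin (kbar - 1) (by omega)
      rwa [Nat.sub_add_cancel h0] at this
  have hsum1 : ∑ k ∈ Finset.range (kbar+1), b k
      = (∑ j ∈ Finset.range kbar, b j) + b kbar := Finset.sum_range_succ _ _
  have hbk : 0 < b kbar := by
    rw [hsum1, mul_add] at hkbar
    nlinarith
  have hnum : (0:ℝ) < (1/c) * D - ∑ j ∈ Finset.range kbar, b j := by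
    have he : (1/c) * D - ∑ j ∈ Finset.range kbar, b j
        = (1/c) * (D - c * ∑ j ∈ Finset.range kbar, b j) := by
      field_simp
    rw [he]
    exact mul_pos h1c (by linarith)
  have hnum2 : (1/c) * D - ∑ j ∈ Finset.range kbar, b j ≤ b kbar := by
    rw [hsum1] at hkbar
    have h2 : (1/c) * D ≤ (1/c) * (c * ((∑ j ∈ Finset.range kbar, b j) + b kbar)) :=
      mul_le_mul_of_nonneg_left hkbar h1c.le
    have h3 : (1/c) * (c * ((∑ j ∈ Finset.range kbar, b j) + b kbar))
        = (∑ j ∈ Finset.range kbar, b j) + b kbar := by field_simp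
    linarith
  have hq0 : 0 ≤ ((1/c) * D - ∑ j ∈ Finset.range kbar, b j) / b kbar :=
    (div_pos hnum hbk).le
  have hq1 : ((1/c) * D - ∑ j ∈ Finset.range kbar, b j) / b kbar ≤ 1 :=
    (div_le_one hbk).mpr hnum2
  have hbindq : b kbar * (((1/c) * D - ∑ j ∈ Finset.range kbar, b j) / b kbar)
      = (1/c) * D - ∑ j ∈ Finset.range kbar, b j := by
    field_simp
  have hsg : ∑ k ∈ Finset.range (t+1), b k * g k = (1/c) * D := by
    have h1 : ∑ k ∈ Finset.range (t+1), b k * g k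
        = ∑ k ∈ Finset.range (kbar+1), b k * g k := by
      symm
      apply Finset.sum_subset (Finset.range_subset_range.mpr (by omega))
      intro x _ hxn
      have hx : kbar < x := by simp only [Finset.mem_range, not_lt] at hxn; omega
      rw [hg x, if_neg (by omega), if_neg (by omega), mul_zero]
    rw [h1, Finset.sum_range_succ]
    have h2 : ∑ k ∈ Finset.range kbar, b k * g k = ∑ j ∈ Finset.range kbar, b j := by
      apply Finset.sum_congr rfl
      intro x hx
      rw [hg x, if_pos (Finset.mem_range.mp hx), mul_one]
    rw [h2, hg kbar, if_neg (lt_irrefl kbar), if_pos rfl, hbindq]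
    ring
  have hfeasg : c * ∑ k ∈ Finset.range (t+1), b k * g k ≥ D := by
    rw [hsg]
    have : c * ((1/c) * D) = D := by field_simp
    linarith
  refine ⟨⟨?_, hfeasg⟩, ?_⟩
  · intro k _
    rw [hg k]
    split_ifs
    · exact ⟨by norm_num, le_refl 1⟩
    · exact ⟨hq0, hq1⟩
    · exact ⟨le_refl 0, by norm_num⟩
  · intro f hf hfeas
    have hbf : ∑ k ∈ Finset.range (t+1), b k * g k ≤ ∑ k ∈ Finset.range (t+1), b k * f k := by
      rw [hsg]
      have h2 : (1/c) * D ≤ (1/c) * (c * ∑ k ∈ Finset.range (t+1), b k * f k) :=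
        mul_le_mul_of_nonneg_left hfeas h1c.le
      have h3 : (1/c) * (c * ∑ k ∈ Finset.range (t+1), b k * f k)
          = ∑ k ∈ Finset.range (t+1), b k * f k := by field_simp
      linarith
    have hterm : ∀ k ∈ Finset.range (t+1),
        a kbar * (b k * (f k - g k)) ≤ b kbar * (a k * (f k - g k)) := by
      intro k hk
      have hkt' : k ≤ t := by simp only [Finset.mem_range] at hk; omega
      rcases lt_trichotomy k kbar with h | h | h
      · have hgk : g k = 1 := by rw [hg k, if_pos h]
        have hfk : f k ≤ 1 := (hf k hkt').2
        have hcr : b kbar * a k ≤ b k * a kbar := hcross k kbar h.le hkt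
        have hd : f k - g k ≤ 0 := by rw [hgk]; linarith
        nlinarith [mul_le_mul_of_nonpos_right hcr hd]
      · subst h; exact le_of_eq (by ring)
      · have hgk : g k = 0 := by rw [hg k, if_neg (by omega), if_neg (by omega)]
        have hcr : b k * a kbar ≤ b kbar * a k := hcross kbar k h.le hkt'
        have hd : 0 ≤ f k - g k := by rw [hgk]; simpa using (hf k hkt').1
        nlinarith [mul_le_mul_of_nonneg_right hcr hd]
    have hsle := Finset.sum_le_sum hterm
    rw [← Finset.mul_sum, ← Finset.mul_sum] at hsle
    have hsplit : ∀ (u : ℕ → ℝ), ∑ k ∈ Finset.range (t+1), u k * (f k - g k)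
        = ∑ k ∈ Finset.range (t+1), u k * f k - ∑ k ∈ Finset.range (t+1), u k * g k := by
      intro u
      rw [← Finset.sum_sub_distrib]
      exact Finset.sum_congr rfl (fun x _ => by ring)
    rw [hsplit b, hsplit a] at hsle
    have hak : 0 < a kbar := ha kbar hkt
    have h4 : 0 ≤ b kbar * (∑ k ∈ Finset.range (t+1), a k * f k
        - ∑ k ∈ Finset.range (t+1), a k * g k) :=
      le_trans (mul_nonneg hak.le (by linarith)) hsle
    nlinarith [h4]

/-- (Proposition 1, optimality) Suppose the linear program is feasible, and let `k̄`
be the smallest `k'` with `((T−t)/T)·Σ_{k ≤ k'} [τ_d μ(k;t) − τ_c λ(k;t)] ≥ τ_d − τ_c`.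
Then the threshold rule `f*` associated with `k̄` is an optimal solution of the
linear program: it is feasible and attains the smallest objective value among all
feasible intervention rules. -/
theorem threshold_rule_optimal (N t T : ℕ) (pl ph : ℝ) (hN : 2 ≤ N)
    (hpl : pl = 1 / N) (hlh : pl < ph) (hph : ph < 1) (ht : 1 ≤ t) (htT : t < T)
    (hfeasLP : ∃ f : ℕ → ℝ, Feasible N t T pl ph f)
    (kbar : ℕ)
    (hkbar : (((T : ℝ) - t) / T) * ∑ k ∈ Finset.range (kbar + 1),
        (tauD N pl ph * mu N t pl ph k - tauC N pl * lam N t pl k)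
      ≥ tauD N pl ph - tauC N pl)
    (hkbarmin : ∀ k' < kbar, (((T : ℝ) - t) / T) * ∑ k ∈ Finset.range (k' + 1),
        (tauD N pl ph * mu N t pl ph k - tauC N pl * lam N t pl k)
      < tauD N pl ph - tauC N pl) :
    Feasible N t T pl ph (thresholdRule N t T pl ph kbar) ∧
    ∀ f : ℕ → ℝ, Feasible N t T pl ph f →
      objective N t pl (thresholdRule N t T pl ph kbar) ≤ objective N t pl f := by
  have hN2 : (2:ℝ) ≤ (N:ℝ) := by exact_mod_cast hN
  have hplpos : 0 < pl := by rw [hpl]; positivity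
  have hpl1 : pl < 1 := by
    rw [hpl, div_lt_one (by linarith)]; linarith
  have hq : 0 < 1 - pl := by linarith
  have hA0 : 0 < (1 - pl)^N := pow_pos hq N
  have hA1 : (1 - pl)^N < 1 := pow_lt_one₀ hq.le (by linarith) (by omega)
  have hph0 : 0 < 1 - ph := by linarith
  have hB0 : 0 < (1 - pl)^(N-1) * (1 - ph) := mul_pos (pow_pos hq _) hph0
  have hBA : (1 - pl)^(N-1) * (1 - ph) < (1 - pl)^N := by
    have hNe : (1 - pl)^N = (1 - pl)^(N-1) * (1 - pl) := by
      conv_lhs => rw [show N = (N-1)+1 by omega]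
      rw [pow_succ]
    rw [hNe]
    have h0 : 0 < (1-pl)^(N-1) := pow_pos hq _
    nlinarith
  have hB1 : (1 - pl)^(N-1) * (1 - ph) < 1 := hBA.trans hA1
  have hT0 : (0:ℝ) < T := by exact_mod_cast (by omega : 0 < T)
  have hTR : (t:ℝ) < T := by exact_mod_cast htT
  have hc : 0 < ((T:ℝ) - t)/T := div_pos (by linarith) hT0
  have hD : 0 < tauD N pl ph - tauC N pl := by
    unfold tauD tauC
    have h0 : 0 < (1-pl)^(N-1) := pow_pos hq _
    nlinarith
  have htauD : 0 < tauD N pl ph := mul_pos (hplpos.trans hlh) (pow_pos hq _)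
  have lam_pos : ∀ k ≤ t, 0 < lam N t pl k := by
    intro k hk
    have h1 : 0 < (t.choose k : ℝ) := by exact_mod_cast Nat.choose_pos hk
    exact mul_pos (mul_pos h1 (pow_pos hA0 k)) (pow_pos (by linarith) _)
  have hcross : ∀ k m, k ≤ m → m ≤ t →
      (tauD N pl ph * mu N t pl ph m - tauC N pl * lam N t pl m) * lam N t pl k ≤
      (tauD N pl ph * mu N t pl ph k - tauC N pl * lam N t pl k) * lam N t pl m := by
    intro k m hkm hmt
    have hmul : mu N t pl ph m * lam N t pl k ≤ mu N t pl ph k * lam N t pl m := by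
      have h := cross_aux ((1-pl)^N) ((1-pl)^(N-1)*(1-ph)) t k m hB0.le hBA.le hA1.le hkm hmt
      simpa [lam, mu] using h
    nlinarith [mul_le_mul_of_nonneg_left hmul htauD.le]
  have hbz : ∀ k, t < k →
      tauD N pl ph * mu N t pl ph k - tauC N pl * lam N t pl k = 0 := by
    intro k hk
    simp [lam, mu, Nat.choose_eq_zero_of_lt hk]
  have hg : ∀ k, thresholdRule N t T pl ph kbar k =
      if k < kbar then 1 else if k = kbar then
        ((1/(((T:ℝ) - t)/T)) * (tauD N pl ph - tauC N pl) -
          ∑ j ∈ Finset.range kbar,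
            (tauD N pl ph * mu N t pl ph j - tauC N pl * lam N t pl j)) /
        (tauD N pl ph * mu N t pl ph kbar - tauC N pl * lam N t pl kbar) else 0 := by
    intro k
    simp only [thresholdRule, one_div_div]
  obtain ⟨⟨h1, h2⟩, h3⟩ := lp_opt t (lam N t pl)
    (fun k => tauD N pl ph * mu N t pl ph k - tauC N pl * lam N t pl k)
    (((T:ℝ) - t)/T) (tauD N pl ph - tauC N pl) hc hD lam_pos hcross hbz kbar
    hkbar hkbarmin (thresholdRule N t T pl ph kbar) hg
  exact ⟨⟨h1, h2⟩, fun f hf => h3 f hf.1 hf.2⟩
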